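/- Let n be a positive integer and q a complex number with q^j ≠ 1 for all 1 ≤ j ≤ n-1. In ℂ[[u,v,w]], define Φ*(1;q) = Σ_{k,r,s ≥ 0} G*(k,r,s;1;q) u^{k-r-s} v^{r-s} w^{s}, where G*(k,r,s;1;q) = Σ_{k ∈ I(k,r,s)} L*_{k}^{(n)}(1;q) is the sum of the star finite q-multiple polylogarithms at t=1 over all indices of weight k, depth r, height s, and G*(0,0,0;1;q) = 1. Then Φ*(1;q) · Π_{j=1}^{n-1} P*(q^j) = Π_{j=1}^{n-1} (1-q^j)(1-u-q^j) holds in ℂ[[u,v,w]], where P*(X) = (1-u-X)(1-v-X) - w. -/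

import Mathlib

open Finset

/-- The set of tuples `(m_1,...,m_r)` with `n > m_1 > m_2 > ... > m_r > 0`. -/
def msets (n r : ℕ) : Finset (Fin r → Fin n) :=
  Finset.univ.filter fun m =>
    (∀ i j : Fin r, i < j → m j < m i) ∧ ∀ i, 0 < (m i : ℕ)

/-- The set of tuples `(m_1,...,m_r)` with `n > m_1 ≥ m_2 ≥ ... ≥ m_r > 0`. -/
def msetsStar (n r : ℕ) : Finset (Fin r → Fin n) :=
  Finset.univ.filter fun m =>
    (∀ i j : Fin r, i ≤ j → m j ≤ m i) ∧ ∀ i, 0 < (m i : ℕ)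

/-- The finite multiple harmonic q-series
`z_n(k_1,…,k_r; q) = Σ_{n > m_1 > … > m_r > 0} Π_i q^{(k_i-1)m_i}/[m_i]_q^{k_i}`,
where `[m]_q = (1-q^m)/(1-q)`. -/
noncomputable def z (n : ℕ) {r : ℕ} (k : Fin r → ℕ) (q : ℂ) : ℂ :=
  ∑ m ∈ msets n r,
    ∏ i, q ^ ((k i - 1) * (m i : ℕ)) / ((1 - q ^ (m i : ℕ)) / (1 - q)) ^ (k i)

/-- The star version `z*_n(k; q)`, summed over `n > m_1 ≥ … ≥ m_r > 0`. -/
noncomputable def zstar (n : ℕ) {r : ℕ} (k : Fin r → ℕ) (q : ℂ) : ℂ :=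
  ∑ m ∈ msetsStar n r,
    ∏ i, q ^ ((k i - 1) * (m i : ℕ)) / ((1 - q ^ (m i : ℕ)) / (1 - q)) ^ (k i)

/-- The modified value `z̄_n(k;q) = (1-q)^{-wt(k)} z_n(k;q)`. -/
noncomputable def zbar (n : ℕ) {r : ℕ} (k : Fin r → ℕ) (q : ℂ) : ℂ :=
  (1 - q)⁻¹ ^ (∑ i, k i) * z n k q

/-- The modified star value `z̄*_n(k;q) = (1-q)^{-wt(k)} z*_n(k;q)`. -/
noncomputable def zstarbar (n : ℕ) {r : ℕ} (k : Fin r → ℕ) (q : ℂ) : ℂ :=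
  (1 - q)⁻¹ ^ (∑ i, k i) * zstar n k q

/-- `I(k,r,s)`: the set of indices (tuples of positive integers) of weight `k`,
depth `r` and height `s`. -/
def indexSet3 (k r s : ℕ) : Finset (Fin r → ℕ) :=
  (Finset.Nat.antidiagonalTuple r k).filter fun a =>
    (∀ i, 1 ≤ a i) ∧ (Finset.univ.filter fun i => 2 ≤ a i).card = s

/-- `I(k,r)`: the set of indices of weight `k` and depth `r`. -/
def indexSet2 (k r : ℕ) : Finset (Fin r → ℕ) :=
  (Finset.Nat.antidiagonalTuple r k).filter fun a => ∀ i, 1 ≤ a i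

/-- The one-variable finite q-multiple polylogarithm
`L_{k_1,…,k_r}^{(n)}(t;q) = Σ_{n > m_1 > … > m_r > 0} t^{m_1} / Π_i (1-q^{m_i})^{k_i}`,
with `L_∅(t) = 1`. -/
noncomputable def Lpoly (n : ℕ) {r : ℕ} (k : Fin r → ℕ) (q t : ℂ) : ℂ :=
  ∑ m ∈ msets n r,
    ∏ i : Fin r, (if i.val = 0 then t ^ (m i : ℕ) else 1) / (1 - q ^ (m i : ℕ)) ^ (k i)

/-- The star version `L*_{k_1,…,k_r}^{(n)}(t;q)`, summed over `n > m_1 ≥ … ≥ m_r > 0`. -/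
noncomputable def LpolyStar (n : ℕ) {r : ℕ} (k : Fin r → ℕ) (q t : ℂ) : ℂ :=
  ∑ m ∈ msetsStar n r,
    ∏ i : Fin r, (if i.val = 0 then t ^ (m i : ℕ) else 1) / (1 - q ^ (m i : ℕ)) ^ (k i)

/-- The variables `x, y, z` (resp. `u, v, w`) of `ℂ[[x,y,z]]`. -/
noncomputable def Xv (i : Fin 3) : MvPowerSeries (Fin 3) ℂ := MvPowerSeries.X i

/-- Constant power series. -/
noncomputable def Cc (c : ℂ) : MvPowerSeries (Fin 3) ℂ := MvPowerSeries.C (σ := Fin 3) (R := ℂ) c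

/-- The generating function `Φ*(1;q)` in `ℂ[[u,v,w]]`: the coefficient of
`u^{k-r-s} v^{r-s} w^s` is `G*(k,r,s;1;q) = Σ_{k ∈ I(k,r,s)} L*_k^{(n)}(1;q)`. -/
noncomputable def PhiStarOne (n : ℕ) (q : ℂ) : MvPowerSeries (Fin 3) ℂ :=
  fun e => ∑ a ∈ indexSet3 (e 0 + e 1 + 2 * e 2) (e 1 + e 2) (e 2), LpolyStar n a q 1

/-! ### Auxiliary lemmas -/

section Aux

open MvPowerSeries

lemma mem_indexSet3 {K r S : ℕ} {a : Fin r → ℕ} :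
    a ∈ indexSet3 K r S ↔
      (∑ i, a i) = K ∧ (∀ i, 1 ≤ a i) ∧ (univ.filter fun i => 2 ≤ a i).card = S := by
  simp [indexSet3, Finset.Nat.mem_antidiagonalTuple, and_assoc]

lemma mem_msetsStar {n r : ℕ} {m : Fin r → Fin n} :
    m ∈ msetsStar n r ↔ (∀ i j : Fin r, i ≤ j → m j ≤ m i) ∧ ∀ i, 0 < (m i : ℕ) := by
  simp [msetsStar]

lemma PhiStarOne_apply (n : ℕ) (q : ℂ) (e : Fin 3 →₀ ℕ) :
    PhiStarOne n q e = ∑ a ∈ indexSet3 (e 0 + e 1 + 2 * e 2) (e 1 + e 2) (e 2),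
      ∑ m ∈ msetsStar n (e 1 + e 2), ∏ i, ((1 - q ^ (m i : ℕ)) ^ (a i))⁻¹ := by
  show (∑ a ∈ _, LpolyStar n a q 1) = _
  refine Finset.sum_congr rfl fun a _ => Finset.sum_congr rfl fun m _ =>
    Finset.prod_congr rfl fun i _ => ?_
  simp [one_div]

lemma inner_zero (N : ℕ) (q : ℂ) (a : Fin 0 → ℕ) :
    ∑ m ∈ msetsStar N 0, ∏ i : Fin 0, ((1 - q ^ (m i : ℕ)) ^ (a i))⁻¹ = 1 := by
  have h : msetsStar N 0 = Finset.univ := by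
    ext m
    simp only [mem_msetsStar, Finset.mem_univ, iff_true]
    exact ⟨fun i => i.elim0, fun i => i.elim0⟩
  rw [h]
  simp

lemma indexSet3_height_empty (K r S : ℕ) (h : r < S) : indexSet3 K r S = ∅ := by
  ext a
  simp only [mem_indexSet3, Finset.notMem_empty, iff_false]
  rintro ⟨-, -, hc⟩
  have := Finset.card_filter_le (univ : Finset (Fin r)) (fun i => 2 ≤ a i)
  simp only [Finset.card_univ, Fintype.card_fin] at this
  omega

lemma card_filter_succ (r : ℕ) (p : Fin (r+1) → Prop) [DecidablePred p] :
    (univ.filter p).card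
      = (if p 0 then 1 else 0) + (univ.filter (fun i : Fin r => p i.succ)).card := by
  rw [Finset.card_filter, Finset.card_filter, Fin.sum_univ_succ]

lemma sum_ge_card (r : ℕ) (b : Fin r → ℕ) (hpos : ∀ i, 1 ≤ b i) :
    r + (univ.filter fun i => 2 ≤ b i).card ≤ ∑ i, b i := by
  rw [Finset.card_filter]
  have h : ∀ i ∈ (univ : Finset (Fin r)), 1 + (if 2 ≤ b i then 1 else 0) ≤ b i := by
    intro i _
    have := hpos i
    split <;> omega
  calc r + ∑ i, (if 2 ≤ b i then 1 else 0)
      = ∑ i : Fin r, (1 + if 2 ≤ b i then 1 else 0) := by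
        rw [Finset.sum_add_distrib, Finset.sum_const, Finset.card_univ, Fintype.card_fin,
          smul_eq_mul, mul_one]
    _ ≤ _ := Finset.sum_le_sum h

lemma image_cons_one (W r S : ℕ) :
    (indexSet3 (W+1) (r+1) S).filter (fun a => a 0 = 1)
      = (indexSet3 W r S).image (Fin.cons 1) := by
  ext b
  simp only [Finset.mem_filter, Finset.mem_image, mem_indexSet3]
  constructor
  · rintro ⟨⟨hsum, hpos, hcard⟩, h0⟩
    refine ⟨Fin.tail b, ⟨?_, fun i => hpos i.succ, ?_⟩, ?_⟩
    · rw [Fin.sum_univ_succ, h0] at hsum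
      simp only [Fin.tail]
      omega
    · rw [card_filter_succ] at hcard
      rw [h0] at hcard
      delta Fin.tail
      simpa using hcard
    · conv_rhs => rw [← Fin.cons_self_tail b]
      rw [h0]
  · rintro ⟨a, ⟨hsum, hpos, hcard⟩, rfl⟩
    refine ⟨⟨?_, ?_, ?_⟩, Fin.cons_zero _ _⟩
    · rw [Fin.sum_univ_succ]
      simp only [Fin.cons_zero, Fin.cons_succ, hsum]
      omega
    · intro i
      refine Fin.cases ?_ ?_ i
      · simp
      · intro k; simpa using hpos k
    · rw [card_filter_succ]
      simp only [Fin.cons_zero, Fin.cons_succ, hcard]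
      norm_num

lemma image_cons_ge2 (W r S k : ℕ) (hk : 2 ≤ k) :
    (indexSet3 (W+k) (r+1) (S+1)).filter (fun a => a 0 = k)
      = (indexSet3 W r S).image (Fin.cons k) := by
  ext b
  simp only [Finset.mem_filter, Finset.mem_image, mem_indexSet3]
  constructor
  · rintro ⟨⟨hsum, hpos, hcard⟩, h0⟩
    refine ⟨Fin.tail b, ⟨?_, fun i => hpos i.succ, ?_⟩, ?_⟩
    · rw [Fin.sum_univ_succ, h0] at hsum
      simp only [Fin.tail]
      omega
    · rw [card_filter_succ] at hcard
      rw [h0, if_pos hk] at hcard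
      delta Fin.tail
      omega
    · conv_rhs => rw [← Fin.cons_self_tail b]
      rw [h0]
  · rintro ⟨a, ⟨hsum, hpos, hcard⟩, rfl⟩
    refine ⟨⟨?_, ?_, ?_⟩, Fin.cons_zero _ _⟩
    · rw [Fin.sum_univ_succ]
      simp only [Fin.cons_zero, Fin.cons_succ, hsum]
      omega
    · intro i
      refine Fin.cases ?_ ?_ i
      · simpa using hk.trans' (by norm_num)
      · intro j; simpa using hpos j
    · rw [card_filter_succ]
      simp only [Fin.cons_zero, Fin.cons_succ, if_pos hk, hcard]
      omega

lemma fiber_empty_big (K r S k : ℕ) (hk : 2 ≤ k) (hbig : K < k + r + S) :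
    (indexSet3 K (r+1) (S+1)).filter (fun a => a 0 = k) = ∅ := by
  ext a
  simp only [Finset.mem_filter, mem_indexSet3, Finset.notMem_empty, iff_false]
  rintro ⟨⟨hsum, hpos, hcard⟩, h0⟩
  have htail := sum_ge_card r (Fin.tail a) (fun i => hpos i.succ)
  rw [card_filter_succ] at hcard
  rw [h0, if_pos hk] at hcard
  rw [Fin.sum_univ_succ, h0] at hsum
  have hc2 : (univ.filter fun i : Fin r => 2 ≤ Fin.tail a i).card = S := by
    delta Fin.tail
    omega
  rw [hc2] at htail
  have : ∑ i : Fin r, a i.succ = ∑ i : Fin r, Fin.tail a i := by simp [Fin.tail]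
  omega

lemma cons_injOn {r : ℕ} (k : ℕ) (s : Finset (Fin r → ℕ)) :
    ∀ x ∈ s, ∀ y ∈ s, (Fin.cons k x : Fin (r+1) → ℕ) = Fin.cons k y → x = y :=
  fun _ _ _ _ h => Fin.cons_right_injective (α := fun _ : Fin (r+1) => ℕ) k h

lemma sum_fiber_one (W r S : ℕ) (A : ℂ) (T : (Fin r → ℕ) → ℂ) :
    ∑ a ∈ (indexSet3 (W+1) (r+1) S).filter (fun a => a 0 = 1), A ^ (a 0) * T (Fin.tail a)
      = A * ∑ a ∈ indexSet3 W r S, T a := by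
  rw [image_cons_one, Finset.sum_image (cons_injOn 1 _), Finset.mul_sum]
  refine Finset.sum_congr rfl fun a _ => ?_
  rw [Fin.cons_zero, Fin.tail_cons, pow_one]

lemma sum_fiber_ge2 (W r S k : ℕ) (hk : 2 ≤ k) (A : ℂ) (T : (Fin r → ℕ) → ℂ) :
    ∑ a ∈ (indexSet3 (W+k) (r+1) (S+1)).filter (fun a => a 0 = k), A ^ (a 0) * T (Fin.tail a)
      = A ^ k * ∑ a ∈ indexSet3 W r S, T a := by
  rw [image_cons_ge2 W r S k hk, Finset.sum_image (cons_injOn k _), Finset.mul_sum]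
  refine Finset.sum_congr rfl fun a _ => ?_
  rw [Fin.cons_zero, Fin.tail_cons]

lemma sum_indexSet3_decomp0 (p r : ℕ) (A : ℂ) (T : (Fin r → ℕ) → ℂ) :
    ∑ a ∈ indexSet3 (p + (r+1)) (r+1) 0, A ^ (a 0) * T (Fin.tail a) =
      A * ∑ a ∈ indexSet3 (p + r) r 0, T a := by
  have hall : ∀ a ∈ indexSet3 (p + (r+1)) (r+1) 0, a 0 = 1 := by
    intro a ha
    obtain ⟨-, hpos, hcard⟩ := mem_indexSet3.mp ha
    by_contra h
    have h2 : 2 ≤ a 0 := by have := hpos 0; omega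
    have hmem : (0 : Fin (r+1)) ∈ univ.filter fun i => 2 ≤ a i := by simp [h2]
    rw [Finset.card_eq_zero.mp hcard] at hmem
    exact absurd hmem (Finset.notMem_empty _)
  calc ∑ a ∈ indexSet3 (p + (r+1)) (r+1) 0, A ^ (a 0) * T (Fin.tail a)
      = ∑ a ∈ (indexSet3 ((p+r)+1) (r+1) 0).filter (fun a => a 0 = 1),
          A ^ (a 0) * T (Fin.tail a) := by
        rw [show p + (r+1) = (p+r)+1 by omega, Finset.filter_true_of_mem]
        intro a ha; exact hall a (by rwa [show p + (r+1) = (p+r)+1 by omega])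
    _ = A * ∑ a ∈ indexSet3 (p + r) r 0, T a := sum_fiber_one (p+r) r 0 A T

lemma sum_indexSet3_decomp (p r S : ℕ) (A : ℂ) (T : (Fin r → ℕ) → ℂ) :
    ∑ a ∈ indexSet3 (p + (r+1) + (S+1)) (r+1) (S+1), A ^ (a 0) * T (Fin.tail a) =
      A * (∑ a ∈ indexSet3 (p + r + (S+1)) r (S+1), T a)
      + ∑ j ∈ range (p+1), A ^ (j+2) * ∑ a ∈ indexSet3 ((p - j) + r + S) r S, T a := by
  set K := p + (r+1) + (S+1) with hK
  set f : (Fin (r+1) → ℕ) → ℂ := fun a => A ^ (a 0) * T (Fin.tail a) with hf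
  have hmaps : ∀ a ∈ indexSet3 K (r+1) (S+1), a 0 ∈ Finset.Icc 1 K := by
    intro a ha
    obtain ⟨hsum, hpos, -⟩ := mem_indexSet3.mp ha
    rw [Finset.mem_Icc]
    refine ⟨hpos 0, ?_⟩
    rw [← hsum]
    exact Finset.single_le_sum (f := a) (fun i _ => Nat.zero_le _) (Finset.mem_univ 0)
  rw [← Finset.sum_fiberwise_of_maps_to hmaps f]
  have hsplit : Finset.Icc 1 K = insert 1 (Finset.Icc 2 K) := by
    ext x; simp only [Finset.mem_Icc, Finset.mem_insert]; omega
  rw [hsplit, Finset.sum_insert (by simp)]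
  congr 1
  · have h := sum_fiber_one (p + r + (S+1)) r (S+1) A T
    rw [show p + r + (S+1) + 1 = K by omega] at h
    exact h
  · rw [← Finset.Ico_add_one_right_eq_Icc, Finset.sum_Ico_eq_sum_range,
      show K + 1 - 2 = (p + r + S) + 1 by omega]
    rw [← Finset.sum_subset (Finset.range_subset_range.mpr (show p + 1 ≤ (p+r+S)+1 by omega))]
    · refine Finset.sum_congr rfl fun j hj => ?_
      have hj' : j ≤ p := by simpa using Nat.lt_succ_iff.mp (Finset.mem_range.mp hj)
      have h := sum_fiber_ge2 ((p - j) + r + S) r S (2 + j) (by omega) A T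
      rw [show (p - j) + r + S + (2 + j) = K by omega] at h
      rw [h, show 2 + j = j + 2 by omega]
    · intro j hj hnj
      have hj1 : p < j := by
        simp only [Finset.mem_range] at hj hnj
        omega
      rw [fiber_empty_big K r S (2+j) (by omega) (by omega)]
      simp

lemma filter_ne_last (n r : ℕ) :
    (msetsStar (n+1) (r+1)).filter (fun m => ¬ m 0 = Fin.last n)
      = (msetsStar n (r+1)).image (fun m i => Fin.castSucc (m i)) := by
  ext m
  simp only [Finset.mem_filter, Finset.mem_image, mem_msetsStar]
  constructor
  · rintro ⟨⟨hmono, hpos⟩, hne⟩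
    have h0 : (m 0 : ℕ) < n := by
      have h1 := (m 0).isLt
      have h2 : (m 0 : ℕ) ≠ n := fun h => hne (Fin.ext (by simpa [Fin.val_last] using h))
      omega
    have hlt : ∀ i, (m i : ℕ) < n := by
      intro i
      have := hmono 0 i (Fin.zero_le i)
      rw [Fin.le_def] at this
      omega
    refine ⟨fun i => ⟨m i, hlt i⟩, ⟨?_, ?_⟩, ?_⟩
    · intro i j hij
      have := hmono i j hij
      rw [Fin.le_def] at this ⊢
      exact this
    · intro i; exact hpos i
    · funext i
      apply Fin.ext
      simp
  · rintro ⟨m', ⟨hmono, hpos⟩, rfl⟩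
    refine ⟨⟨?_, ?_⟩, ?_⟩
    · intro i j hij
      have := hmono i j hij
      rw [Fin.le_def] at this ⊢
      simpa using this
    · intro i; simpa using hpos i
    · intro h
      have := congrArg Fin.val h
      simp only [Fin.coe_castSucc, Fin.val_last] at this
      exact absurd this (Nat.ne_of_lt (m' 0).isLt)

lemma filter_eq_last (n r : ℕ) (hn : 0 < n) :
    (msetsStar (n+1) (r+1)).filter (fun m => m 0 = Fin.last n)
      = (msetsStar (n+1) r).image (fun m => Fin.cons (Fin.last n) m) := by
  ext m
  simp only [Finset.mem_filter, Finset.mem_image, mem_msetsStar]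
  constructor
  · rintro ⟨⟨hmono, hpos⟩, h0⟩
    refine ⟨Fin.tail m, ⟨?_, fun i => hpos i.succ⟩, ?_⟩
    · intro i j hij
      exact hmono i.succ j.succ (by rwa [Fin.succ_le_succ_iff])
    · conv_rhs => rw [← Fin.cons_self_tail m]
      rw [h0]
  · rintro ⟨m', ⟨hmono, hpos⟩, rfl⟩
    refine ⟨⟨?_, ?_⟩, Fin.cons_zero _ _⟩
    · intro i j hij
      induction i using Fin.cases with
      | zero => rw [Fin.cons_zero]; exact Fin.le_last _
      | succ i' =>
        induction j using Fin.cases with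
        | zero =>
          have h0 : (i'.succ : Fin (r+1)) = 0 := le_antisymm hij (Fin.zero_le _)
          exact absurd h0 (Fin.succ_ne_zero i')
        | succ j' =>
          rw [Fin.cons_succ, Fin.cons_succ]
          exact hmono i' j' (by rwa [Fin.succ_le_succ_iff] at hij)
    · intro i
      refine Fin.cases ?_ ?_ i
      · simpa using hn
      · intro k; simpa using hpos k

lemma sum_msetsStar_split' (n r : ℕ) (hn : 0 < n) (q : ℂ) (a : Fin (r+1) → ℕ) :
    ∑ m ∈ msetsStar (n+1) (r+1), ∏ i, ((1 - q ^ (m i : ℕ)) ^ (a i))⁻¹ =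
      (∑ m ∈ msetsStar n (r+1), ∏ i, ((1 - q ^ (m i : ℕ)) ^ (a i))⁻¹)
      + ((1 - q ^ n)⁻¹) ^ (a 0) *
        ∑ m ∈ msetsStar (n+1) r, ∏ i, ((1 - q ^ (m i : ℕ)) ^ (Fin.tail a i))⁻¹ := by
  rw [← Finset.sum_filter_add_sum_filter_not (msetsStar (n+1) (r+1))
      (fun m => m 0 = Fin.last n), add_comm]
  congr 1
  · rw [filter_ne_last n r,
      Finset.sum_image (fun x _ y _ h => ?_)]
    · refine Finset.sum_congr rfl fun m _ => Finset.prod_congr rfl fun i _ => by simp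
    · funext i
      exact Fin.castSucc_injective n (congrFun h i)
  · rw [filter_eq_last n r hn,
      Finset.sum_image (fun x _ y _ h => Fin.cons_right_injective
        (α := fun _ : Fin (r+1) => Fin (n+1)) (Fin.last n) h),
      Finset.mul_sum]
    refine Finset.sum_congr rfl fun m _ => ?_
    rw [Fin.prod_univ_succ]
    simp only [Fin.cons_zero, Fin.cons_succ, Fin.val_last, Fin.tail]
    rw [inv_pow]

/-! ### Power series helpers -/

lemma coeff_Xv_mul (s : Fin 3) (φ : MvPowerSeries (Fin 3) ℂ) (e : Fin 3 →₀ ℕ) :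
    MvPowerSeries.coeff e (Xv s * φ) =
      if 1 ≤ e s then MvPowerSeries.coeff (e - Finsupp.single s 1) φ else 0 := by
  rw [Xv, MvPowerSeries.X_def, MvPowerSeries.coeff_monomial_mul]
  simp [Finsupp.single_le_iff]

lemma coeff_mul_Xv (s : Fin 3) (φ : MvPowerSeries (Fin 3) ℂ) (e : Fin 3 →₀ ℕ) :
    MvPowerSeries.coeff e (φ * Xv s) =
      if 1 ≤ e s then MvPowerSeries.coeff (e - Finsupp.single s 1) φ else 0 := by
  rw [Xv, MvPowerSeries.X_def, MvPowerSeries.coeff_mul_monomial]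
  simp [Finsupp.single_le_iff]

lemma coeff_Cc_mul (c : ℂ) (φ : MvPowerSeries (Fin 3) ℂ) (e : Fin 3 →₀ ℕ) :
    MvPowerSeries.coeff e (Cc c * φ) = c * MvPowerSeries.coeff e φ :=
  MvPowerSeries.coeff_C_mul _ _ _

lemma coeff_mul_Cc (c : ℂ) (φ : MvPowerSeries (Fin 3) ℂ) (e : Fin 3 →₀ ℕ) :
    MvPowerSeries.coeff e (φ * Cc c) = MvPowerSeries.coeff e φ * c :=
  MvPowerSeries.coeff_mul_C _ _ _

lemma sub_single_apply (e : Fin 3 →₀ ℕ) (s t : Fin 3) (k : ℕ) :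
    (e - Finsupp.single s k) t = if s = t then e t - k else e t := by
  rw [Finsupp.tsub_apply, Finsupp.single_apply]
  split <;> omega

lemma sub_apply_ne (e : Fin 3 →₀ ℕ) (s t : Fin 3) (k : ℕ) (h : s ≠ t) :
    (e - Finsupp.single s k) t = e t := by
  rw [sub_single_apply, if_neg h]

lemma sub_apply_self (e : Fin 3 →₀ ℕ) (s : Fin 3) (k : ℕ) :
    (e - Finsupp.single s k) s = e s - k := by
  rw [sub_single_apply, if_pos rfl]

noncomputable def Wof (c : ℂ) (Φ : MvPowerSeries (Fin 3) ℂ) : MvPowerSeries (Fin 3) ℂ :=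
  fun e => ∑ k ∈ range (e 0 + 1), ((1 - c)⁻¹) ^ (k+1) * Φ (e - Finsupp.single 0 k)

lemma Wof_apply (c : ℂ) (Φ : MvPowerSeries (Fin 3) ℂ) (e : Fin 3 →₀ ℕ) :
    Wof c Φ e = ∑ k ∈ range (e 0 + 1), ((1 - c)⁻¹) ^ (k+1) * Φ (e - Finsupp.single 0 k) := rfl

lemma Wof_mul (c : ℂ) (Φ : MvPowerSeries (Fin 3) ℂ) (hc : c ≠ 1) :
    Wof c Φ * (1 - Xv 0 - Cc c) = Φ := by
  have hA : (1 - c)⁻¹ * (1 - c) = 1 := inv_mul_cancel₀ (sub_ne_zero.mpr (Ne.symm hc))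
  apply MvPowerSeries.ext
  intro e
  rw [mul_sub, mul_sub, mul_one, map_sub, map_sub, coeff_mul_Xv, coeff_mul_Cc]
  rw [MvPowerSeries.coeff_apply, MvPowerSeries.coeff_apply, MvPowerSeries.coeff_apply,
    Wof_apply, Wof_apply]
  set A := (1 - c)⁻¹ with hAdef
  cases he0 : e 0 with
  | zero =>
    rw [if_neg (by omega)]
    simp only [zero_add, Finset.sum_range_one, Finsupp.single_zero, tsub_zero, pow_one]
    calc A * Φ e - 0 - A * Φ e * c = (A * (1 - c)) * Φ e := by ring
      _ = Φ e := by rw [hA, one_mul]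
  | succ p =>
    rw [if_pos (by omega)]
    have hsub : (e - Finsupp.single (0 : Fin 3) (1 : ℕ)) 0 = p := by
      rw [sub_single_apply]; simp [he0]
    rw [hsub]
    have hstep : ∀ k : ℕ, (e - Finsupp.single 0 1) - Finsupp.single 0 k
        = e - Finsupp.single 0 (k+1) := by
      intro k
      rw [tsub_tsub, ← Finsupp.single_add, add_comm]
    calc (∑ k ∈ range (p + 1 + 1), A ^ (k+1) * Φ (e - Finsupp.single 0 k))
          - (∑ k ∈ range (p + 1), A ^ (k+1) * Φ ((e - Finsupp.single 0 1) - Finsupp.single 0 k))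
          - (∑ k ∈ range (p + 1 + 1), A ^ (k+1) * Φ (e - Finsupp.single 0 k)) * c
        = (∑ k ∈ range (p + 1 + 1), A ^ k * Φ (e - Finsupp.single 0 k))
          - ∑ k ∈ range (p + 1), A ^ (k+1) * Φ (e - Finsupp.single 0 (k+1)) := by
          rw [Finset.sum_mul, sub_right_comm, ← Finset.sum_sub_distrib]
          congr 1
          · refine Finset.sum_congr rfl fun k _ => ?_
            calc A ^ (k+1) * Φ (e - Finsupp.single 0 k)
                  - A ^ (k+1) * Φ (e - Finsupp.single 0 k) * c
                = (A * (1-c)) * (A ^ k * Φ (e - Finsupp.single 0 k)) := by ring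
              _ = _ := by rw [hA, one_mul]
          · refine Finset.sum_congr rfl fun k _ => ?_
            rw [hstep]
      _ = Φ e := by
          rw [Finset.sum_range_succ']
          simp

/-! ### The three key identities -/

lemma PhiStarOne_one (q : ℂ) : PhiStarOne 1 q = 1 := by
  apply MvPowerSeries.ext
  intro e
  rw [MvPowerSeries.coeff_apply, MvPowerSeries.coeff_one, PhiStarOne_apply]
  by_cases he : e = 0
  · subst he
    rw [if_pos rfl]
    simp only [Finsupp.coe_zero, Pi.zero_apply, mul_zero, add_zero]
    show (∑ a ∈ indexSet3 0 0 0,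
      ∑ m ∈ msetsStar 1 0, ∏ i : Fin 0, ((1 - q ^ (m i : ℕ)) ^ (a i))⁻¹) = 1
    have hmem : (fun i : Fin 0 => i.elim0) ∈ indexSet3 0 0 0 := by
      rw [mem_indexSet3]
      refine ⟨by simp, fun i => i.elim0, by simp⟩
    have hset : indexSet3 0 0 0 = {fun i : Fin 0 => i.elim0} :=
      Finset.eq_singleton_iff_unique_mem.mpr
        ⟨hmem, fun a _ => funext fun i => i.elim0⟩
    rw [hset, Finset.sum_singleton, inner_zero]
  · rw [if_neg he]
    cases hre : e 1 + e 2 with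
    | zero =>
      have h0 : e 0 ≠ 0 := by
        intro h
        apply he
        ext i
        fin_cases i
        · simpa using h
        · simpa using (by omega : e 1 = 0)
        · simpa using (by omega : e 2 = 0)
      obtain ⟨t, ht⟩ := Nat.exists_eq_succ_of_ne_zero h0
      rw [show e 0 + e 1 + 2 * e 2 = t + 1 from by omega]
      have hempty : indexSet3 (t+1) 0 (e 2) = ∅ := by
        ext a
        simp [mem_indexSet3]
      rw [hempty, Finset.sum_empty]
    | succ r =>
      have hempty : msetsStar 1 (r+1) = ∅ := by
        ext m
        simp only [mem_msetsStar, Finset.notMem_empty, iff_false, not_and]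
        intro _ hpos
        have h1 := (m 0).isLt
        have h2 := hpos 0
        omega
      rw [hempty]
      simp

lemma P1 (n : ℕ) (hn : 0 < n) (q : ℂ) :
    PhiStarOne (n+1) q = PhiStarOne n q
      + Xv 1 * (Cc ((1 - q ^ n)⁻¹) * PhiStarOne (n+1) q)
      + Xv 2 * (Cc ((1 - q ^ n)⁻¹) * Wof (q ^ n) (PhiStarOne (n+1) q)) := by
  apply MvPowerSeries.ext
  intro e
  rw [map_add, map_add, coeff_Xv_mul, coeff_Xv_mul, coeff_Cc_mul, coeff_Cc_mul]
  simp only [MvPowerSeries.coeff_apply]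
  cases hre : e 1 + e 2 with
  | zero =>
    rw [if_neg (by omega), if_neg (by omega), add_zero, add_zero,
      PhiStarOne_apply, PhiStarOne_apply, hre]
    refine Finset.sum_congr rfl fun a _ => ?_
    rw [inner_zero, inner_zero]
  | succ r =>
    rw [PhiStarOne_apply (n+1) q e, hre]
    have hsplit : (∑ a ∈ indexSet3 (e 0 + e 1 + 2 * e 2) (r+1) (e 2),
        ∑ m ∈ msetsStar (n+1) (r+1), ∏ i, ((1 - q ^ (m i : ℕ)) ^ (a i))⁻¹)
      = (∑ a ∈ indexSet3 (e 0 + e 1 + 2 * e 2) (r+1) (e 2),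
          ∑ m ∈ msetsStar n (r+1), ∏ i, ((1 - q ^ (m i : ℕ)) ^ (a i))⁻¹)
        + ∑ a ∈ indexSet3 (e 0 + e 1 + 2 * e 2) (r+1) (e 2),
            ((1 - q ^ n)⁻¹) ^ (a 0) *
              ∑ m ∈ msetsStar (n+1) r, ∏ i, ((1 - q ^ (m i : ℕ)) ^ (Fin.tail a i))⁻¹ := by
      rw [← Finset.sum_add_distrib]
      exact Finset.sum_congr rfl fun a _ => sum_msetsStar_split' n r hn q a
    rw [hsplit]
    have hPhin : PhiStarOne n q e = ∑ a ∈ indexSet3 (e 0 + e 1 + 2 * e 2) (r+1) (e 2),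
        ∑ m ∈ msetsStar n (r+1), ∏ i, ((1 - q ^ (m i : ℕ)) ^ (a i))⁻¹ := by
      rw [PhiStarOne_apply, hre]
    rw [← hPhin, add_assoc (PhiStarOne n q e)]
    congr 1
    cases hs : e 2 with
    | zero =>
      rw [if_pos (show (1:ℕ) ≤ e 1 from by omega),
        if_neg (show ¬ (1:ℕ) ≤ 0 from by omega), add_zero]
      rw [show e 0 + e 1 + 2 * 0 = e 0 + (r+1) from by omega]
      refine Eq.trans (sum_indexSet3_decomp0 (e 0) r ((1 - q ^ n)⁻¹)
        (fun b => ∑ m ∈ msetsStar (n+1) r, ∏ i, ((1 - q ^ (m i : ℕ)) ^ (b i))⁻¹)) ?_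
      congr 1
      rw [PhiStarOne_apply (n+1) q (e - Finsupp.single 1 1)]
      rw [sub_apply_ne e 1 0 1 (by decide), sub_apply_self e 1 1,
        sub_apply_ne e 1 2 1 (by decide), hs]
      rw [show e 0 + (e 1 - 1) + 2 * 0 = e 0 + r from by omega,
        show e 1 - 1 + 0 = r from by omega]
    | succ S =>
      rw [if_pos (show (1:ℕ) ≤ S + 1 from by omega)]
      rw [show e 0 + e 1 + 2 * (S+1) = e 0 + (r+1) + (S+1) from by omega]
      refine Eq.trans (sum_indexSet3_decomp (e 0) r S ((1 - q ^ n)⁻¹)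
        (fun b => ∑ m ∈ msetsStar (n+1) r, ∏ i, ((1 - q ^ (m i : ℕ)) ^ (b i))⁻¹)) ?_
      congr 1
      · by_cases h1 : 1 ≤ e 1
        · rw [if_pos h1]
          congr 1
          rw [PhiStarOne_apply (n+1) q (e - Finsupp.single 1 1)]
          rw [sub_apply_ne e 1 0 1 (by decide), sub_apply_self e 1 1,
            sub_apply_ne e 1 2 1 (by decide), hs]
          rw [show e 0 + (e 1 - 1) + 2 * (S+1) = e 0 + r + (S+1) from by omega,
            show e 1 - 1 + (S+1) = r from by omega]
        · rw [if_neg h1, indexSet3_height_empty _ _ _ (show r < S+1 from by omega)]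
          simp
      · rw [Wof_apply]
        rw [sub_apply_ne e 2 0 1 (by decide)]
        rw [Finset.mul_sum]
        refine Finset.sum_congr rfl fun j hj => ?_
        rw [PhiStarOne_apply (n+1) q (e - Finsupp.single 2 1 - Finsupp.single 0 j)]
        have c0 : (e - Finsupp.single (2:Fin 3) (1:ℕ) - Finsupp.single (0:Fin 3) j) 0 = e 0 - j := by
          rw [sub_apply_self, sub_apply_ne e 2 0 1 (by decide)]
        have c1 : (e - Finsupp.single (2:Fin 3) (1:ℕ) - Finsupp.single (0:Fin 3) j) 1 = e 1 := by
          rw [sub_apply_ne _ 0 1 j (by decide), sub_apply_ne e 2 1 1 (by decide)]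
        have c2 : (e - Finsupp.single (2:Fin 3) (1:ℕ) - Finsupp.single (0:Fin 3) j) 2 = S := by
          rw [sub_apply_ne _ 0 2 j (by decide), sub_apply_self e 2 1, hs]
          omega
        rw [c0, c1, c2]
        rw [show e 0 - j + e 1 + 2 * S = (e 0 - j) + r + S from by omega,
          show e 1 + S = r from by omega]
        ring

lemma key_lemma (n : ℕ) (hn : 0 < n) (q : ℂ) (hq : q ^ n ≠ 1) :
    PhiStarOne (n+1) q * ((1 - Xv 0 - Cc (q ^ n)) * (1 - Xv 1 - Cc (q ^ n)) - Xv 2) =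
      PhiStarOne n q * (Cc (1 - q ^ n) * (1 - Xv 0 - Cc (q ^ n))) := by
  have hC : (Cc (1 - q ^ n)) * Cc ((1 - q ^ n)⁻¹) = 1 := by
    rw [Cc, Cc, ← map_mul (MvPowerSeries.C (σ := Fin 3) (R := ℂ)), mul_inv_cancel₀ (sub_ne_zero.mpr (Ne.symm hq)), map_one]
  have hW := Wof_mul (q ^ n) (PhiStarOne (n+1) q) hq
  have hP := P1 n hn q
  have hE : Cc (1 - q ^ n) = 1 - Cc (q ^ n) := by rw [Cc, map_sub, map_one]; rfl
  linear_combination (Cc (1 - q ^ n) * (1 - Xv 0 - Cc (q ^ n))) * hP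
    + Xv 2 * hW
    + (Xv 1 * (1 - Xv 0 - Cc (q ^ n)) * PhiStarOne (n+1) q
        + Xv 2 * (Wof (q ^ n) (PhiStarOne (n+1) q) * (1 - Xv 0 - Cc (q ^ n)))) * hC
    - (PhiStarOne (n+1) q * (1 - Xv 0 - Cc (q ^ n))) * hE

end Aux

/-- `Φ*(1;q)·Π_{j=1}^{n-1} P*(q^j) = Π_{j=1}^{n-1}(1-q^j)(1-u-q^j)`
in `ℂ[[u,v,w]]`, where `P*(X) = (1-u-X)(1-v-X)-w`. -/
theorem PhiStarOne_eval (n : ℕ) (hn : 0 < n) (q : ℂ)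
    (hq : ∀ j : ℕ, 1 ≤ j → j ≤ n - 1 → q ^ j ≠ 1) :
    PhiStarOne n q * ∏ j ∈ Finset.Ico 1 n,
        ((1 - Xv 0 - Cc (q ^ j)) * (1 - Xv 1 - Cc (q ^ j)) - Xv 2) =
      ∏ j ∈ Finset.Ico 1 n, (Cc (1 - q ^ j) * (1 - Xv 0 - Cc (q ^ j))) := by
  induction n, hn using Nat.le_induction with
  | base =>
    rw [show Finset.Ico 1 1 = (∅ : Finset ℕ) from rfl, Finset.prod_empty, Finset.prod_empty,
      mul_one, PhiStarOne_one]
  | succ n hn ih =>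
    have hqn : q ^ n ≠ 1 := hq n hn (by omega)
    have ih' := ih (fun j h1 h2 => hq j h1 (by omega))
    rw [Finset.prod_Ico_succ_top (by omega), Finset.prod_Ico_succ_top (by omega)]
    have hkey := key_lemma n hn q hqn
    calc PhiStarOne (n+1) q * ((∏ j ∈ Finset.Ico 1 n,
            ((1 - Xv 0 - Cc (q ^ j)) * (1 - Xv 1 - Cc (q ^ j)) - Xv 2)) *
            ((1 - Xv 0 - Cc (q ^ n)) * (1 - Xv 1 - Cc (q ^ n)) - Xv 2))
        = (PhiStarOne (n+1) q * ((1 - Xv 0 - Cc (q ^ n)) * (1 - Xv 1 - Cc (q ^ n)) - Xv 2))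
            * ∏ j ∈ Finset.Ico 1 n,
              ((1 - Xv 0 - Cc (q ^ j)) * (1 - Xv 1 - Cc (q ^ j)) - Xv 2) := by ring
      _ = (PhiStarOne n q * (Cc (1 - q ^ n) * (1 - Xv 0 - Cc (q ^ n))))
            * ∏ j ∈ Finset.Ico 1 n,
              ((1 - Xv 0 - Cc (q ^ j)) * (1 - Xv 1 - Cc (q ^ j)) - Xv 2) := by rw [hkey]
      _ = (PhiStarOne n q * ∏ j ∈ Finset.Ico 1 n,
            ((1 - Xv 0 - Cc (q ^ j)) * (1 - Xv 1 - Cc (q ^ j)) - Xv 2))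
            * (Cc (1 - q ^ n) * (1 - Xv 0 - Cc (q ^ n))) := by ring
      _ = (∏ j ∈ Finset.Ico 1 n, (Cc (1 - q ^ j) * (1 - Xv 0 - Cc (q ^ j))))
            * (Cc (1 - q ^ n) * (1 - Xv 0 - Cc (q ^ n))) := by rw [ih']
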